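/- Let G be a weighted undirected graph partitioned into subgraphs G_1, ..., G_k with boundary vertex sets B_1, ..., B_k and B = B_1 ∪ ... ∪ B_k. Construct the overlay graph G̃ on vertex set B whose edges are: (1) for each partition i and each pair b_1, b_2 ∈ B_i, an edge of weight d_{G_i}(b_1, b_2) equal to the shortest-path distance between b_1 and b_2 restricted to the subgraph G_i (the local partition distance); and (2) every inter-partition edge of G (i.e., edges whose endpoints are boundary vertices of different partitions) with its original weight. Then for all s, t ∈ B, the shortest distance in the overlay graph equals the shortest distance in G: d_G(s,t) = d_{G̃}(s,t). -/

import Mathlib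

open scoped ENNReal Classical

namespace PSP

/-- A weighted undirected graph: symmetric adjacency and a weight function
with values in `ℝ≥0∞` (so weights are non-negative). -/
structure WGraph (V : Type*) where
  Adj : V → V → Prop
  symm : ∀ {u v}, Adj u v → Adj v u
  w : V → V → ℝ≥0∞

variable {V : Type*} {ι : Type*}

/-- Sum of `f` over consecutive pairs of a list. -/
noncomputable def pairSum (f : V → V → ℝ≥0∞) : List V → ℝ≥0∞
  | a :: b :: rest => f a b + pairSum f (b :: rest)
  | _ => 0

/-- Weighted length of a walk (given as a list of vertices). -/
noncomputable def wlen (G : WGraph V) (l : List V) : ℝ≥0∞ := pairSum G.w l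

/-- `l` is a walk in `G` from `s` to `t`: consecutive vertices are adjacent,
the first vertex is `s` and the last is `t`. -/
def IsWalk (G : WGraph V) (s t : V) (l : List V) : Prop :=
  l.Chain' G.Adj ∧ l.head? = some s ∧ l.getLast? = some t

/-- Shortest-path distance in `G` (`⊤` if no walk exists). -/
noncomputable def dist (G : WGraph V) (s t : V) : ℝ≥0∞ :=
  sInf {x | ∃ l, IsWalk G s t l ∧ wlen G l = x}

/-- Induced subgraph on a vertex set `S`. -/
def induce (G : WGraph V) (S : Set V) : WGraph V where
  Adj u v := G.Adj u v ∧ u ∈ S ∧ v ∈ S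
  symm h := ⟨G.symm h.1, h.2.2, h.2.1⟩
  w := G.w

/-- A partition of the vertex set is given by a function `P : V → ι`
assigning each vertex its partition index. The set of all boundary
vertices: vertices having a neighbor in another partition. -/
def bdry (G : WGraph V) (P : V → ι) : Set V :=
  {v | ∃ u, G.Adj v u ∧ P u ≠ P v}

/-- Boundary vertices of partition `i`. -/
def bdryIn (G : WGraph V) (P : V → ι) (i : ι) : Set V :=
  {v | P v = i ∧ ∃ u, G.Adj v u ∧ P u ≠ i}

/-- The induced subgraph `G_i` of partition `i`. -/
def partGraph (G : WGraph V) (P : V → ι) (i : ι) : WGraph V :=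
  induce G {x | P x = i}

/-- The No-Boundary overlay graph `G̃`: vertices are boundary vertices; for each
partition, each boundary pair gets an edge of weight equal to the *local*
partition distance; inter-partition edges of `G` keep their original weight. -/
noncomputable def overlay (G : WGraph V) (P : V → ι) : WGraph V where
  Adj u v := (P u = P v ∧ u ∈ bdry G P ∧ v ∈ bdry G P) ∨ (P u ≠ P v ∧ G.Adj u v)
  symm := by
    rintro u v (⟨h1, h2, h3⟩ | ⟨h1, h2⟩)
    · exact Or.inl ⟨h1.symm, h3, h2⟩
    · exact Or.inr ⟨fun h => h1 h.symm, G.symm h2⟩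
  w u v := if P u = P v then dist (partGraph G P (P u)) u v else G.w u v

/-- A half-connected boundary vertex: has a non-boundary neighbor in its own partition. -/
def halfC (G : WGraph V) (P : V → ι) (b : V) : Prop :=
  b ∈ bdry G P ∧ ∃ u, G.Adj b u ∧ P u = P b ∧ u ∉ bdry G P

/-- A full-connected boundary vertex: all in-partition neighbors are boundary vertices. -/
def fullC (G : WGraph V) (P : V → ι) (b : V) : Prop :=
  b ∈ bdry G P ∧ ∀ u, G.Adj b u → P u = P b → u ∈ bdry G P

/-- The pruned overlay graph `G̃'`, with inserted boundary-pair weights `ω`: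
edges among half-connected boundary pairs of the same partition (weight `ω`),
all inter-partition edges, and the original in-partition adjacent edges of
full-connected boundary vertices. -/
noncomputable def pruned (G : WGraph V) (P : V → ι) (ω : V → V → ℝ≥0∞) : WGraph V where
  Adj u v :=
    (P u = P v ∧ halfC G P u ∧ halfC G P v) ∨
    (P u ≠ P v ∧ G.Adj u v) ∨
    (P u = P v ∧ G.Adj u v ∧ u ∈ bdry G P ∧ v ∈ bdry G P ∧ (fullC G P u ∨ fullC G P v))
  symm := by
    rintro u v (⟨h1, h2, h3⟩ | ⟨h1, h2⟩ | ⟨h1, h2, h3, h4, h5⟩)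
    · exact Or.inl ⟨h1.symm, h3, h2⟩
    · exact Or.inr (Or.inl ⟨fun h => h1 h.symm, G.symm h2⟩)
    · exact Or.inr (Or.inr ⟨h1.symm, G.symm h2, h4, h3, h5.symm⟩)
  w u v := if P u = P v ∧ halfC G P u ∧ halfC G P v then ω u v else G.w u v

/-- The augmented partition graph `G'_i`: the induced subgraph `G_i` plus, for each
boundary pair `b₁ b₂ ∈ B_i`, an inserted edge of weight `ω b₁ b₂` (taking the
minimum with an already-existing edge weight). -/
noncomputable def augment (G : WGraph V) (P : V → ι) (i : ι) (ω : V → V → ℝ≥0∞) : WGraph V where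
  Adj u v := (G.Adj u v ∧ P u = i ∧ P v = i) ∨ (u ∈ bdryIn G P i ∧ v ∈ bdryIn G P i)
  symm := by
    rintro u v (⟨h1, h2, h3⟩ | ⟨h1, h2⟩)
    · exact Or.inl ⟨G.symm h1, h3, h2⟩
    · exact Or.inr ⟨h2, h1⟩
  w u v :=
    if u ∈ bdryIn G P i ∧ v ∈ bdryIn G P i then
      (if G.Adj u v ∧ P u = i ∧ P v = i then min (ω u v) (G.w u v) else ω u v)
    else G.w u v

/-- Graph obtained from `G` by adding, for every pair `u v ∈ S`, a shortcut edge
of weight `dist G u v` (taking the minimum with an already-existing edge weight). -/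
noncomputable def shortcut (G : WGraph V) (S : Set V) : WGraph V where
  Adj u v := G.Adj u v ∨ (u ∈ S ∧ v ∈ S)
  symm := by
    rintro u v (h | ⟨h1, h2⟩)
    · exact Or.inl (G.symm h)
    · exact Or.inr ⟨h2, h1⟩
  w u v :=
    if u ∈ S ∧ v ∈ S then
      (if G.Adj u v then min (dist G u v) (G.w u v) else dist G u v)
    else G.w u v

/-- Vertex-splitting construction: each cut vertex `x ∈ X` keeps its neighbors in
group `N x 0`; for `1 ≤ i ≤ l x` a duplicate `(x, i)` is created, connected to the
vertices of `N x i` with the original weights and to `x` by a zero-weight edge. -/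
noncomputable def split (G : WGraph V) (X : Set V) (N : V → ℕ → Set V) (l : V → ℕ) :
    WGraph (V ⊕ V × ℕ) where
  Adj a b := match a, b with
    | .inl u, .inl v => G.Adj u v ∧ (u ∈ X → v ∈ N u 0) ∧ (v ∈ X → u ∈ N v 0)
    | .inl v, .inr (x, i) => x ∈ X ∧ 1 ≤ i ∧ i ≤ l x ∧ ((G.Adj x v ∧ v ∈ N x i) ∨ v = x)
    | .inr (x, i), .inl v => x ∈ X ∧ 1 ≤ i ∧ i ≤ l x ∧ ((G.Adj x v ∧ v ∈ N x i) ∨ v = x)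
    | .inr _, .inr _ => False
  symm := by
    rintro (u | ⟨x, i⟩) (v | ⟨y, j⟩) h
    · exact ⟨G.symm h.1, h.2.2, h.2.1⟩
    · exact h
    · exact h
    · exact h.elim
  w a b := match a, b with
    | .inl u, .inl v => G.w u v
    | .inl v, .inr (x, _) => if v = x then 0 else G.w x v
    | .inr (x, _), .inl v => if v = x then 0 else G.w x v
    | .inr _, .inr _ => 0


section Aux

variable {G : WGraph V} {P : V → ι}

lemma dist_le_wlen (G : WGraph V) {s t : V} {l : List V} (h : IsWalk G s t l) :
    dist G s t ≤ wlen G l := sInf_le ⟨l, h, rfl⟩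

lemma isWalk_single (G : WGraph V) (a : V) : IsWalk G a a [a] :=
  ⟨List.isChain_singleton a, rfl, rfl⟩

lemma dist_self (G : WGraph V) (a : V) : dist G a a = 0 :=
  le_antisymm (by simpa [wlen, pairSum] using dist_le_wlen G (isWalk_single G a)) zero_le

lemma dist_le_w (G : WGraph V) {u v : V} (h : G.Adj u v) : dist G u v ≤ G.w u v := by
  have : IsWalk G u v [u, v] := ⟨List.isChain_pair.mpr h, rfl, rfl⟩
  simpa [wlen, pairSum] using dist_le_wlen G this

lemma isWalk_cons (G : WGraph V) {a d c : V} {m : List V} (h : G.Adj a d)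
    (hm : IsWalk G d c m) : IsWalk G a c (a :: m) ∧ wlen G (a :: m) = G.w a d + wlen G m := by
  obtain ⟨hch, hhd, hlast⟩ := hm
  cases m with
  | nil => simp at hhd
  | cons e m' =>
    have he : e = d := by simpa using hhd
    subst he
    refine ⟨⟨List.isChain_cons_cons.mpr ⟨h, hch⟩, rfl, ?_⟩, rfl⟩
    simpa [List.getLast?_cons_cons] using hlast

lemma dist_cons (G : WGraph V) {a d c : V} (h : G.Adj a d) :
    dist G a c ≤ G.w a d + dist G d c := by
  conv_rhs => rw [add_comm, dist, ENNReal.sInf_add]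
  refine le_iInf₂ fun x hx => ?_
  obtain ⟨m, hm, rfl⟩ := hx
  obtain ⟨hw, hlen⟩ := isWalk_cons G h hm
  calc dist G a c ≤ wlen G (a :: m) := dist_le_wlen G hw
    _ = wlen G m + G.w a d := by rw [hlen, add_comm]

lemma dist_triangle (G : WGraph V) (a b c : V) :
    dist G a c ≤ dist G a b + dist G b c := by
  conv_rhs => rw [dist, ENNReal.sInf_add]
  refine le_iInf₂ fun x hx => ?_
  obtain ⟨l, hl, rfl⟩ := hx
  suffices h : ∀ (l : List V) (a : V), IsWalk G a b l →
      dist G a c ≤ wlen G l + dist G b c from h l a hl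
  intro l
  induction l with
  | nil => intro a hw; exact absurd hw.2.1 (by simp)
  | cons a' l' ih =>
    intro a hw
    have ha' : a = a' := by have := hw.2.1; simp at this; exact this.symm
    subst ha'
    cases l' with
    | nil =>
      have hab : a = b := by simpa using hw.2.2
      subst hab
      simp [wlen, pairSum]
    | cons d r =>
      have hch := List.isChain_cons_cons.mp hw.1
      have hwd : IsWalk G d b (d :: r) := ⟨hch.2, rfl, by
        simpa [List.getLast?_cons_cons] using hw.2.2⟩
      calc dist G a c ≤ G.w a d + dist G d c := dist_cons G hch.1
        _ ≤ G.w a d + (wlen G (d :: r) + dist G b c) := by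
            exact add_le_add_right (ih d hwd) _
        _ = wlen G (a :: d :: r) + dist G b c := by
            simp [wlen, pairSum, add_assoc]

/-- If every edge of `G'` admits a `G`-distance below its weight, then
`G`-distances are below `G'`-distances. -/
lemma dist_le_dist (G G' : WGraph V)
    (h : ∀ u v, G'.Adj u v → dist G u v ≤ G'.w u v) (s t : V) :
    dist G s t ≤ dist G' s t := by
  refine le_sInf fun x hx => ?_
  obtain ⟨l, hl, rfl⟩ := hx
  suffices hh : ∀ (l : List V) (s : V), IsWalk G' s t l → dist G s t ≤ wlen G' l from
    hh l s hl
  intro l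
  induction l with
  | nil => intro a hw; exact absurd hw.2.1 (by simp)
  | cons a' l' ih =>
    intro a hw
    have ha' : a = a' := by have := hw.2.1; simp at this; exact this.symm
    subst ha'
    cases l' with
    | nil =>
      have hab : a = t := by simpa using hw.2.2
      subst hab
      simp [wlen, pairSum, dist_self]
    | cons d r =>
      have hch := List.isChain_cons_cons.mp hw.1
      have hwd : IsWalk G' d t (d :: r) := ⟨hch.2, rfl, by
        simpa [List.getLast?_cons_cons] using hw.2.2⟩
      calc dist G a t ≤ dist G a d + dist G d t := dist_triangle G a d t
        _ ≤ G'.w a d + wlen G' (d :: r) := add_le_add (h a d hch.1) (ih d hwd)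
        _ = wlen G' (a :: d :: r) := by simp [wlen, pairSum]

lemma claimC (G : WGraph V) (P : V → ι) {t : V} (ht : t ∈ bdry G P) :
    ∀ (l : List V) (a : V), IsWalk G a t l → ∀ b, b ∈ bdry G P → P b = P a →
      dist (overlay G P) b t ≤ dist (partGraph G P (P a)) b a + wlen G l := by
  intro l
  induction l with
  | nil => intro a hw; exact absurd hw.2.1 (by simp)
  | cons a' l' ih =>
    intro a hw b hb hPb
    have ha' : a = a' := by have := hw.2.1; simp at this; exact this.symm
    subst ha'
    cases l' with
    | nil =>
      have hat : a = t := by simpa using hw.2.2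
      subst hat
      have hadj : (overlay G P).Adj b a := Or.inl ⟨hPb, hb, ht⟩
      have hwle := dist_le_w (overlay G P) hadj
      have hweq : (overlay G P).w b a = dist (partGraph G P (P a)) b a := by
        simp only [overlay, if_pos hPb, hPb, if_true]
      rw [hweq] at hwle
      simpa [wlen, pairSum] using hwle
    | cons c r =>
      have hch := List.isChain_cons_cons.mp hw.1
      have hwc : IsWalk G c t (c :: r) := ⟨hch.2, rfl, by
        simpa [List.getLast?_cons_cons] using hw.2.2⟩
      have hwlen : wlen G (a :: c :: r) = G.w a c + wlen G (c :: r) := rfl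
      by_cases hPc : P c = P a
      · have hih := ih c hwc b hb (hPb.trans hPc.symm)
        rw [hPc] at hih
        have h1 : dist (partGraph G P (P a)) b c ≤
            dist (partGraph G P (P a)) b a + G.w a c := by
          refine le_trans (dist_triangle _ b a c) (add_le_add_right ?_ _)
          exact dist_le_w _ ⟨hch.1, rfl, hPc⟩
        calc dist (overlay G P) b t
            ≤ dist (partGraph G P (P a)) b c + wlen G (c :: r) := hih
          _ ≤ (dist (partGraph G P (P a)) b a + G.w a c) + wlen G (c :: r) :=
              add_le_add_left h1 _
          _ = dist (partGraph G P (P a)) b a + wlen G (a :: c :: r) := by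
              rw [hwlen, add_assoc]
      · have ha : a ∈ bdry G P := ⟨c, hch.1, hPc⟩
        have hc : c ∈ bdry G P := ⟨a, G.symm hch.1, fun h => hPc h.symm⟩
        have hih := ih c hwc c hc rfl
        rw [dist_self, zero_add] at hih
        have h1 : dist (overlay G P) b a ≤ dist (partGraph G P (P a)) b a := by
          have hadj : (overlay G P).Adj b a := Or.inl ⟨hPb, hb, ha⟩
          have := dist_le_w (overlay G P) hadj
          rwa [show (overlay G P).w b a = dist (partGraph G P (P a)) b a by
            simp only [overlay, if_pos hPb, hPb, if_true]] at this
        have h2 : dist (overlay G P) a c ≤ G.w a c := by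
          have hne : P a ≠ P c := fun h => hPc h.symm
          have hadj : (overlay G P).Adj a c := Or.inr ⟨hne, hch.1⟩
          have := dist_le_w (overlay G P) hadj
          rwa [show (overlay G P).w a c = G.w a c by simp only [overlay, if_neg hne]] at this
        calc dist (overlay G P) b t
            ≤ dist (overlay G P) b a + dist (overlay G P) a t := dist_triangle _ b a t
          _ ≤ dist (overlay G P) b a +
              (dist (overlay G P) a c + dist (overlay G P) c t) :=
              add_le_add_right (dist_triangle _ a c t) _
          _ ≤ dist (partGraph G P (P a)) b a + (G.w a c + wlen G (c :: r)) :=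
              add_le_add h1 (add_le_add h2 hih)
          _ = dist (partGraph G P (P a)) b a + wlen G (a :: c :: r) := by rw [hwlen]

end Aux

/-- Theorem 1, No-Boundary correctness on boundary pairs:
for all boundary vertices `s t`, `d_G(s,t) = d_G̃(s,t)`. -/
theorem stmt1 {V ι : Type*} (G : WGraph V) (P : V → ι) (s t : V)
    (hs : s ∈ bdry G P) (ht : t ∈ bdry G P) :
    dist G s t = dist (overlay G P) s t := by
  refine le_antisymm ?_ ?_
  · refine dist_le_dist G (overlay G P) (fun u v hadj => ?_) s t
    rcases hadj with ⟨h1, h2, h3⟩ | ⟨h1, h2⟩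
    · have hle : dist G u v ≤ dist (partGraph G P (P u)) u v := by
        refine dist_le_dist G _ (fun x y hxy => ?_) u v
        exact dist_le_w G hxy.1
      rwa [show (overlay G P).w u v = dist (partGraph G P (P u)) u v by
        simp only [overlay, if_pos h1]]
    · rw [show (overlay G P).w u v = G.w u v by simp only [overlay, if_neg h1]]
      exact dist_le_w G h2
  · refine le_sInf fun x hx => ?_
    obtain ⟨l, hl, rfl⟩ := hx
    have := claimC G P ht l s hl s hs rfl
    rwa [dist_self, zero_add] at this

end PSP
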